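/- arXiv:1610.03356 — 2 statements merged into one kernel-verified Lean document; each statement's English description precedes it below -/
import Mathlib

section
/- For every integer k ≥ 1 and every polynomial q ∈ R, ((E − 0)∘(E − 1)∘⋯∘(E − (k−1)))(q) = ∑_{α ∈ ℕ^n, |α| = k} (k!/(α_1!⋯α_n!)) · x^α · ∂^α q, where (E − j)(q) denotes E(q) − j·q. -/
open MvPolynomial

namespace Arrangement

variable {n : ℕ}

/-- The Euler operator `E(q) = ∑ᵢ xᵢ · ∂q/∂xᵢ`. -/
noncomputable def eulerOp (q : MvPolynomial (Fin n) ℂ) : MvPolynomial (Fin n) ℂ :=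
  ∑ i, X i * pderiv i q

/-- The iterated partial derivative `∂^α = ∂₁^{α₁} ∘ ⋯ ∘ ∂ₙ^{αₙ}`. -/
noncomputable def pdIter (α : Fin n → ℕ) : Module.End ℂ (MvPolynomial (Fin n) ℂ) :=
  (List.finRange n).foldr
    (fun i f => ((pderiv i : Derivation ℂ _ _).toLinearMap ^ α i) * f) 1

/-- The composition `(E − 0) ∘ (E − 1) ∘ ⋯ ∘ (E − (k−1))`, applied to `q`. -/
noncomputable def eulerDownProd : ℕ → MvPolynomial (Fin n) ℂ → MvPolynomial (Fin n) ℂ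
  | 0, q => q
  | k + 1, q => eulerDownProd k (eulerOp q - (k : MvPolynomial (Fin n) ℂ) * q)

end Arrangement

open Arrangement Nat

namespace EulerAux

variable {n : ℕ}

noncomputable def P (i : Fin n) : Module.End ℂ (MvPolynomial (Fin n) ℂ) :=
  (pderiv i : Derivation ℂ _ _).toLinearMap

@[simp] lemma P_apply (i : Fin n) (q : MvPolynomial (Fin n) ℂ) : P i q = pderiv i q := rfl

lemma pderiv_comm' (i j : Fin n) (q : MvPolynomial (Fin n) ℂ) :
    pderiv i (pderiv j q) = pderiv j (pderiv i q) := by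
  induction q using MvPolynomial.induction_on' with
  | monomial s a =>
    simp only [pderiv_monomial]
    rcases eq_or_ne i j with rfl | hij
    · rfl
    · rw [tsub_right_comm]
      congr 1
      have h1 : ((s - Finsupp.single j 1 : Fin n →₀ ℕ)) i = s i := by
        rw [Finsupp.tsub_apply, Finsupp.single_apply, if_neg hij.symm]; rfl
      have h2 : ((s - Finsupp.single i 1 : Fin n →₀ ℕ)) j = s j := by
        rw [Finsupp.tsub_apply, Finsupp.single_apply, if_neg hij]; rfl
      rw [h1, h2]; ring
  | add p q hp hq => simp [hp, hq]

lemma commP (i j : Fin n) : Commute (P (n := n) i) (P j) :=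
  LinearMap.ext fun q => pderiv_comm' i j q

noncomputable def EL : Module.End ℂ (MvPolynomial (Fin n) ℂ) :=
  ∑ i, (LinearMap.mulLeft ℂ (X i : MvPolynomial (Fin n) ℂ)) * P i

lemma EL_apply (q : MvPolynomial (Fin n) ℂ) : EL q = eulerOp q := by
  simp [EL, eulerOp, LinearMap.sum_apply, Module.End.mul_apply]

set_option maxHeartbeats 1000000 in
lemma comm_P_EL (i : Fin n) : P (n := n) i * EL = EL * P i + P i := by
  refine LinearMap.ext fun q => ?_
  simp only [Module.End.mul_apply, LinearMap.add_apply, P_apply, EL_apply, eulerOp]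
  have hx : ∀ j : Fin n, pderiv i (X j : MvPolynomial (Fin n) ℂ) * pderiv j q
      = if j = i then pderiv i q else 0 := by
    intro j
    rcases eq_or_ne j i with rfl | hj
    · simp
    · simp [pderiv_X_of_ne hj, hj]
  calc pderiv i (∑ j, X j * pderiv j q)
      = ∑ j, (pderiv i (X j) * pderiv j q + X j * pderiv i (pderiv j q)) := by
        rw [map_sum]; exact Finset.sum_congr rfl fun j _ => pderiv_mul
    _ = ∑ j, (if j = i then pderiv i q else 0)
          + ∑ j, X j * pderiv j (pderiv i q) := by
        rw [Finset.sum_add_distrib]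
        refine congrArg₂ (· + ·) ?_ ?_
        · exact Finset.sum_congr rfl fun j _ => hx j
        · exact Finset.sum_congr rfl fun j _ => by rw [pderiv_comm' i j q]
    _ = (∑ j, X j * pderiv j (pderiv i q)) + pderiv i q := by
        rw [Finset.sum_ite_eq' Finset.univ i (fun _ => pderiv i q)]
        simp [add_comm]

lemma comm_pow_EL (i : Fin n) (m : ℕ) :
    P (n := n) i ^ m * EL = EL * P i ^ m + m • (P i ^ m) := by
  induction m with
  | zero => simp
  | succ m ih =>
    calc P i ^ (m + 1) * EL = P i * (P i ^ m * EL) := by rw [_root_.pow_succ', mul_assoc]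
      _ = P i * (EL * P i ^ m + m • P i ^ m) := by rw [ih]
      _ = (P i * EL) * P i ^ m + m • (P i * P i ^ m) := by
          rw [mul_add, mul_smul_comm, mul_assoc]
      _ = (EL * P i + P i) * P i ^ m + m • (P i ^ (m + 1)) := by
          rw [comm_P_EL, _root_.pow_succ']
      _ = EL * P i ^ (m + 1) + (m + 1) • P i ^ (m + 1) := by
          rw [add_mul, mul_assoc, ← _root_.pow_succ', succ_nsmul]
          abel

noncomputable def Dl (α : Fin n → ℕ) (l : List (Fin n)) :
    Module.End ℂ (MvPolynomial (Fin n) ℂ) :=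
  l.foldr (fun i f => P i ^ α i * f) 1

lemma pdIter_eq_Dl (α : Fin n → ℕ) : pdIter α = Dl α (List.finRange n) := rfl

@[simp] lemma Dl_nil (α : Fin n → ℕ) : Dl α [] = 1 := rfl

@[simp] lemma Dl_cons (α : Fin n → ℕ) (i : Fin n) (l : List (Fin n)) :
    Dl α (i :: l) = P i ^ α i * Dl α l := rfl

lemma Dl_congr {α β : Fin n → ℕ} {l : List (Fin n)} (h : ∀ j ∈ l, α j = β j) :
    Dl α l = Dl β l := by
  induction l with
  | nil => rfl
  | cons a l ih =>
    rw [Dl_cons, Dl_cons, h a List.mem_cons_self,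
      ih fun j hj => h j (List.mem_cons_of_mem a hj)]

lemma Dl_one {α : Fin n → ℕ} {l : List (Fin n)} (h : ∀ j ∈ l, α j = 0) : Dl α l = 1 := by
  induction l with
  | nil => rfl
  | cons a l ih =>
    rw [Dl_cons, h a List.mem_cons_self, pow_zero, one_mul,
      ih fun j hj => h j (List.mem_cons_of_mem a hj)]

lemma comm_Dl_EL (α : Fin n → ℕ) (l : List (Fin n)) :
    Dl α l * EL = EL * Dl α l + (l.map α).sum • Dl α l := by
  induction l with
  | nil => simp
  | cons a l ih =>
    calc Dl α (a :: l) * EL = P a ^ α a * (Dl α l * EL) := by rw [Dl_cons, mul_assoc]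
      _ = P a ^ α a * (EL * Dl α l) + (l.map α).sum • (P a ^ α a * Dl α l) := by
          rw [ih, mul_add, mul_smul_comm]
      _ = (P a ^ α a * EL) * Dl α l + (l.map α).sum • Dl α (a :: l) := by
          rw [mul_assoc, Dl_cons]
      _ = EL * Dl α (a :: l) + α a • Dl α (a :: l) + (l.map α).sum • Dl α (a :: l) := by
          rw [comm_pow_EL, add_mul, Dl_cons, mul_assoc, smul_mul_assoc]
      _ = EL * Dl α (a :: l) + ((a :: l).map α).sum • Dl α (a :: l) := by
          rw [List.map_cons, List.sum_cons, add_nsmul, add_assoc]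

lemma Dl_add_single {α : Fin n → ℕ} {i : Fin n} {l : List (Fin n)}
    (hmem : i ∈ l) (hnd : l.Nodup) :
    Dl (α + Pi.single i 1) l = P i * Dl α l := by
  induction l with
  | nil => simp at hmem
  | cons a l ih =>
    rw [List.nodup_cons] at hnd
    rcases List.mem_cons.mp hmem with rfl | hi
    · have hcongr : Dl (α + Pi.single i 1) l = Dl α l :=
        Dl_congr fun j hj => by
          have : j ≠ i := fun h => hnd.1 (h ▸ hj)
          simp [Pi.single_eq_of_ne this]
      rw [Dl_cons, Dl_cons, hcongr, Pi.add_apply, Pi.single_eq_same, _root_.pow_succ',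
        mul_assoc]
    · have hai : a ≠ i := fun h => hnd.1 (h ▸ hi)
      rw [Dl_cons, Dl_cons, ih hi hnd.2, Pi.add_apply, Pi.single_eq_of_ne hai, add_zero,
        ← mul_assoc, ← mul_assoc, ((commP i a).pow_right (α a)).eq]

lemma pdIter_add_single (α : Fin n → ℕ) (i : Fin n) :
    pdIter (α + Pi.single i 1) = P i * pdIter α := by
  rw [pdIter_eq_Dl, pdIter_eq_Dl]
  exact Dl_add_single (List.mem_finRange i) (List.nodup_finRange n)

lemma comm_pdIter_EL (α : Fin n → ℕ) :
    pdIter α * EL = EL * pdIter α + (∑ i, α i) • pdIter α := by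
  rw [pdIter_eq_Dl, comm_Dl_EL, Fin.sum_univ_def]

lemma pdIter_zero : pdIter (0 : Fin n → ℕ) = (1 : Module.End ℂ (MvPolynomial (Fin n) ℂ)) :=
  Dl_one fun _ _ => rfl

lemma multinomial_rec (β : Fin n → ℕ) (k : ℕ) (hβ : ∑ i, β i = k + 1) :
    ∑ i, (if 1 ≤ β i then Nat.multinomial Finset.univ (β - Pi.single i 1) else 0)
      = Nat.multinomial Finset.univ β := by
  have hP : 0 < ∏ i, (β i)! := Finset.prod_pos fun i _ => Nat.factorial_pos _
  apply Nat.eq_of_mul_eq_mul_left hP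
  have hterm : ∀ i : Fin n, (∏ j, (β j)!) *
      (if 1 ≤ β i then Nat.multinomial Finset.univ (β - Pi.single i 1) else 0)
      = β i * k ! := by
    intro i
    by_cases hi : 1 ≤ β i
    · rw [if_pos hi]
      have hsub : ∀ j : Fin n, j ≠ i → (β - Pi.single i 1 : Fin n → ℕ) j = β j := fun j hj => by
        simp [Pi.single_eq_of_ne hj]
      have hsubi : (β - Pi.single i 1 : Fin n → ℕ) i = β i - 1 := by simp
      have e1 : β i + ∑ j ∈ Finset.univ.erase i, β j = k + 1 := by
        rw [Finset.add_sum_erase _ β (Finset.mem_univ i), hβ]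
      have hsum : ∑ j, (β - Pi.single i 1 : Fin n → ℕ) j = k := by
        rw [← Finset.add_sum_erase _ _ (Finset.mem_univ i), hsubi,
          Finset.sum_congr rfl fun j hj => hsub j (Finset.ne_of_mem_erase hj)]
        have e2 : (Finset.univ.erase i).sum β = ∑ j ∈ Finset.univ.erase i, β j := rfl
        omega
      have p2 : ∏ j, ((β - Pi.single i 1 : Fin n → ℕ) j)!
          = (β i - 1)! * ∏ j ∈ Finset.univ.erase i, (β j)! := by
        rw [← Finset.mul_prod_erase _ _ (Finset.mem_univ i), hsubi,
          Finset.prod_congr rfl fun j hj => by rw [hsub j (Finset.ne_of_mem_erase hj)]]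
      have hprod : ∏ j, (β j)! = β i * ∏ j, ((β - Pi.single i 1 : Fin n → ℕ) j)! := by
        rw [p2, ← Finset.mul_prod_erase _ _ (Finset.mem_univ i), ← mul_assoc,
          Nat.mul_factorial_pred (Nat.one_le_iff_ne_zero.mp hi)]
      rw [hprod, mul_assoc, Nat.multinomial_spec, hsum]
    · rw [if_neg hi]
      have h0 : β i = 0 := by omega
      simp [h0]
  rw [Finset.mul_sum, Finset.sum_congr rfl fun i _ => hterm i, ← Finset.sum_mul, hβ,
    Nat.multinomial_spec, hβ, Nat.factorial_succ]

lemma prodX_add_single (α : Fin n → ℕ) (i : Fin n) :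
    (∏ j, (X j : MvPolynomial (Fin n) ℂ) ^ ((α + Pi.single i 1 : Fin n → ℕ) j))
      = (∏ j, (X j : MvPolynomial (Fin n) ℂ) ^ α j) * X i := by
  have h1 : ∀ j : Fin n, (X j : MvPolynomial (Fin n) ℂ) ^ ((α + Pi.single i 1 : Fin n → ℕ) j)
      = X j ^ α j * X j ^ (Pi.single i 1 : Fin n → ℕ) j := fun j => by
    rw [Pi.add_apply, pow_add]
  rw [Finset.prod_congr rfl fun j _ => h1 j, Finset.prod_mul_distrib]
  congr 1
  rw [Finset.prod_eq_single i (fun j _ hj => by simp [Pi.single_eq_of_ne hj])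
    (fun h => absurd (Finset.mem_univ i) h)]
  simp

lemma key (k : ℕ) (q : MvPolynomial (Fin n) ℂ) :
    eulerDownProd k q =
      ∑ α ∈ Finset.Nat.antidiagonalTuple n k,
        (Nat.multinomial Finset.univ α : MvPolynomial (Fin n) ℂ) *
          ((∏ i, X i ^ α i) * pdIter α q) := by
  induction k generalizing q with
  | zero =>
    rw [Finset.Nat.antidiagonalTuple_zero_right, Finset.sum_singleton]
    have h1 : Nat.multinomial Finset.univ (0 : Fin n → ℕ) = 1 := by
      simp [Nat.multinomial]
    show q = _
    rw [h1, pdIter_zero]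
    simp
  | succ k ih =>
    show eulerDownProd k (eulerOp q - (k : MvPolynomial (Fin n) ℂ) * q) = _
    rw [ih]
    have hstep : ∀ α ∈ Finset.Nat.antidiagonalTuple n k,
        (Nat.multinomial Finset.univ α : MvPolynomial (Fin n) ℂ) *
          ((∏ i, X i ^ α i) *
            pdIter α (eulerOp q - (k : MvPolynomial (Fin n) ℂ) * q))
        = ∑ i, (Nat.multinomial Finset.univ α : MvPolynomial (Fin n) ℂ) *
            ((∏ j, X j ^ ((α + Pi.single i 1 : Fin n → ℕ) j)) *
              pdIter (α + Pi.single i 1) q) := by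
      intro α hα
      have hk : ∑ i, α i = k := (Finset.Nat.mem_antidiagonalTuple).mp hα
      have h1 : pdIter α (eulerOp q - (k : MvPolynomial (Fin n) ℂ) * q)
          = EL (pdIter α q) := by
        have h2 : (k : MvPolynomial (Fin n) ℂ) * q = (k : ℕ) • q := (nsmul_eq_mul k q).symm
        rw [map_sub, h2, map_nsmul]
        have h3 := congrArg (fun T : Module.End ℂ (MvPolynomial (Fin n) ℂ) => T q)
          (comm_pdIter_EL α)
        simp only [Module.End.mul_apply, LinearMap.add_apply, LinearMap.smul_apply] at h3
        rw [← EL_apply, h3, hk]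
        abel
      rw [h1]
      have h4 : EL (pdIter α q) = ∑ i, X i * pdIter (α + Pi.single i 1) q := by
        rw [EL_apply, eulerOp]
        exact Finset.sum_congr rfl fun i _ => by
          rw [pdIter_add_single]; rfl
      rw [h4, Finset.mul_sum, Finset.mul_sum]
      refine Finset.sum_congr rfl fun i _ => ?_
      rw [prodX_add_single]
      ring
    rw [Finset.sum_congr rfl hstep, Finset.sum_comm]
    have hre : ∀ i : Fin n,
        (∑ α ∈ Finset.Nat.antidiagonalTuple n k,
          (Nat.multinomial Finset.univ α : MvPolynomial (Fin n) ℂ) *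
            ((∏ j, X j ^ ((α + Pi.single i 1 : Fin n → ℕ) j)) *
              pdIter (α + Pi.single i 1) q))
        = ∑ β ∈ Finset.Nat.antidiagonalTuple n (k + 1),
            ((if 1 ≤ β i then Nat.multinomial Finset.univ (β - Pi.single i 1) else 0 : ℕ) :
              MvPolynomial (Fin n) ℂ) *
              ((∏ j, X j ^ β j) * pdIter β q) := by
      intro i
      have hcast : ∀ β : Fin n → ℕ,
          ((if 1 ≤ β i then Nat.multinomial Finset.univ (β - Pi.single i 1) else 0 : ℕ) :
            MvPolynomial (Fin n) ℂ) * ((∏ j, X j ^ β j) * pdIter β q)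
          = if 1 ≤ β i then
              (Nat.multinomial Finset.univ (β - Pi.single i 1) : MvPolynomial (Fin n) ℂ) *
                ((∏ j, X j ^ β j) * pdIter β q)
            else 0 := fun β => by
        split_ifs <;> simp
      rw [Finset.sum_congr rfl fun β _ => hcast β, ← Finset.sum_filter]
      refine Finset.sum_nbij' (fun α => α + Pi.single i 1) (fun β => β - Pi.single i 1)
        ?_ ?_ ?_ ?_ ?_
      · intro α hα
        have hk : ∑ j, α j = k := (Finset.Nat.mem_antidiagonalTuple).mp hα
        rw [Finset.mem_filter]
        constructor
        · rw [Finset.Nat.mem_antidiagonalTuple]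
          have : ∑ j, (α + Pi.single i 1 : Fin n → ℕ) j
              = (∑ j, α j) + ∑ j, (Pi.single i 1 : Fin n → ℕ) j := by
            rw [← Finset.sum_add_distrib]; rfl
          rw [this, hk, Finset.sum_pi_single']
          simp
        · simp
      · intro β hβ
        rw [Finset.mem_filter] at hβ
        obtain ⟨hβ1, hβ2⟩ := hβ
        rw [Finset.Nat.mem_antidiagonalTuple] at hβ1 ⊢
        beta_reduce
        have e1 : β i + ∑ j ∈ Finset.univ.erase i, β j = k + 1 := by
          rw [Finset.add_sum_erase _ β (Finset.mem_univ i), hβ1]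
        rw [← Finset.add_sum_erase _ _ (Finset.mem_univ i),
          Finset.sum_congr rfl fun j hj => show (β - Pi.single i 1 : Fin n → ℕ) j = β j by
            simp [Pi.single_eq_of_ne (Finset.ne_of_mem_erase hj)]]
        have hsubi : (β - Pi.single i 1 : Fin n → ℕ) i = β i - 1 := by simp
        have e2 : (Finset.univ.erase i).sum β = ∑ j ∈ Finset.univ.erase i, β j := rfl
        rw [hsubi]
        omega
      · intro α hα
        funext j
        rcases eq_or_ne j i with rfl | hj
        · simp
        · simp [Pi.single_eq_of_ne hj]
      · intro β hβ
        rw [Finset.mem_filter] at hβ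
        funext j
        rcases eq_or_ne j i with rfl | hj
        · have := hβ.2
          simp only [Pi.add_apply, Pi.sub_apply, Pi.single_eq_same]
          omega
        · simp [Pi.single_eq_of_ne hj]
      · intro α hα
        have hinv : (α + Pi.single i 1 - Pi.single i 1 : Fin n → ℕ) = α := by
          funext j
          rcases eq_or_ne j i with rfl | hj
          · simp
          · simp [Pi.single_eq_of_ne hj]
        rw [hinv]
    rw [Finset.sum_congr rfl fun i (_ : i ∈ Finset.univ) => hre i, Finset.sum_comm]
    refine Finset.sum_congr rfl fun β hβ => ?_
    have hβ1 : ∑ j, β j = k + 1 := (Finset.Nat.mem_antidiagonalTuple).mp hβ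
    rw [← Finset.sum_mul, ← Nat.cast_sum, multinomial_rec β k hβ1]

end EulerAux

open Arrangement in
/-- For every `k ≥ 1` and every polynomial `q`,
`(E − 0)(E − 1)⋯(E − (k−1))(q) = ∑_{|α| = k} (k!/(α₁!⋯αₙ!)) · x^α · ∂^α q`. -/
theorem eulerDownProd_eq_sum_multinomial
    (n : ℕ) (hn : 1 ≤ n) (k : ℕ) (hk : 1 ≤ k) (q : MvPolynomial (Fin n) ℂ) :
    eulerDownProd k q =
      ∑ α ∈ Finset.Nat.antidiagonalTuple n k,
        (Nat.multinomial Finset.univ α : MvPolynomial (Fin n) ℂ) *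
          ((∏ i, X i ^ α i) * pdIter α q) := by
  exact EulerAux.key k q
end

section
/- Let a_1,…,a_n ∈ ℂ[x_1,…,x_n] and c_0, c_1,…,c_p ∈ ℂ[x_1,…,x_n], and consider the operator P = ∑_{i=1}^n (multiplication by a_i)∘D_i + (multiplication by c_0 + ∑_{j=1}^p c_j s_j) on M (this is the general form of an operator of order at most one for the ♯-filtration of D[s_1,…,s_p]). Then P(1) = 0 in M if and only if c_0 = 0 and, for every j ∈ {1,…,p}, ∑_{i=1}^n a_i·(∂f_j/∂x_i) = −c_j·f_j. In particular, P annihilates f_1^{s_1}⋯f_p^{s_p} exactly when the derivation χ = ∑_i a_i ∂/∂x_i is logarithmic for each f_j (χ(f_j) ∈ Ideal.span {f_j}) and P = χ̃, the operator obtained from χ by subtracting ∑_j b_j s_j where χ(f_j) = b_j f_j; consequently χ ↦ χ̃ is a bijection from logarithmic derivations to order-one ♯-operators annihilating f_1^{s_1}⋯f_p^{s_p}. -/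
open MvPolynomial

namespace Arrangement

variable {n : ℕ} {ι : Type} [Fintype ι]

/-- The module `D(A)` of logarithmic derivations of the arrangement defined by
the forms `l i`. -/
noncomputable def DA (l : ι → MvPolynomial (Fin n) ℂ) :
    Submodule (MvPolynomial (Fin n) ℂ)
      (Derivation ℂ (MvPolynomial (Fin n) ℂ) (MvPolynomial (Fin n) ℂ)) where
  carrier := {χ | ∀ i, χ (l i) ∈ Ideal.span {l i}}
  add_mem' := fun hx hy i => by
    simpa using add_mem (hx i) (hy i)
  zero_mem' := fun i => by simp
  smul_mem' := fun r χ hχ i => by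
    simpa using Ideal.mul_mem_left _ r (hχ i)

open Classical in
/-- The property characterizing the family of twisted derivatives
`D i = ∂/∂xᵢ + ∑ⱼ sⱼ (∂lⱼ/∂xᵢ)/lⱼ` acting on the localization
`M = ℂ[x,s,1/F]·l^s`. -/
def IsTwisted (l : ι → MvPolynomial (Fin n) ℂ)
    (D : Fin n → Module.End ℂ
      (Localization.Away (rename Sum.inl (∏ i, l i) : MvPolynomial (Fin n ⊕ ι) ℂ))) : Prop :=
  (∀ (i : Fin n) (r : MvPolynomial (Fin n ⊕ ι) ℂ)
      (m : Localization.Away (rename Sum.inl (∏ i, l i) : MvPolynomial (Fin n ⊕ ι) ℂ)),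
      D i (algebraMap _ _ r * m)
        = algebraMap _ _ (pderiv (Sum.inl i) r) * m + algebraMap _ _ r * D i m) ∧
  (∀ i : Fin n,
      algebraMap (MvPolynomial (Fin n ⊕ ι) ℂ) _ (rename Sum.inl (∏ j, l j)) * D i 1
        = algebraMap _ _ (∑ j, X (Sum.inr j) *
            rename Sum.inl (pderiv i (l j) * ∏ k ∈ Finset.univ.erase j, l k)))

/-- The algebra `W` of operators on `M`, image of the Weyl algebra
`Aₙ(ℂ)[s₁,…,s_p]` acting on `ℂ[x,s,1/F]·l^s`. -/
noncomputable def Wa (l : ι → MvPolynomial (Fin n) ℂ)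
    (D : Fin n → Module.End ℂ
      (Localization.Away (rename Sum.inl (∏ i, l i) : MvPolynomial (Fin n ⊕ ι) ℂ))) :
    Subalgebra ℂ (Module.End ℂ
      (Localization.Away (rename Sum.inl (∏ i, l i) : MvPolynomial (Fin n ⊕ ι) ℂ))) :=
  Algebra.adjoin ℂ
    ((Set.range fun i : Fin n =>
        LinearMap.mulLeft ℂ (algebraMap _ _ (X (Sum.inl i) : MvPolynomial (Fin n ⊕ ι) ℂ))) ∪
     (Set.range fun j : ι =>
        LinearMap.mulLeft ℂ (algebraMap _ _ (X (Sum.inr j) : MvPolynomial (Fin n ⊕ ι) ℂ))) ∪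
     Set.range D)

/-- The Bernstein ideal `B(A)`, as the set of polynomials `b(s₁,…,s_p)` such that
`b · l^s = P · l^{s+1}` for some operator `P` in the Weyl algebra. -/
noncomputable def Bideal (l : ι → MvPolynomial (Fin n) ℂ)
    (D : Fin n → Module.End ℂ
      (Localization.Away (rename Sum.inl (∏ i, l i) : MvPolynomial (Fin n ⊕ ι) ℂ))) :
    Set (MvPolynomial ι ℂ) :=
  {b | ∃ P ∈ Wa l D,
    algebraMap (MvPolynomial (Fin n ⊕ ι) ℂ) _ ((rename Sum.inr b : MvPolynomial (Fin n ⊕ ι) ℂ))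
      = P (algebraMap _ _ (rename Sum.inl (∏ i, l i) : MvPolynomial (Fin n ⊕ ι) ℂ))}

/-- The linear functional on `ℂⁿ` associated to a linear form. -/
noncomputable def toLin (f : MvPolynomial (Fin n) ℂ) : (Fin n → ℂ) →ₗ[ℂ] ℂ :=
  ∑ i, f.coeff (Finsupp.single i 1) • LinearMap.proj i

/-- The hyperplane `ker lᵢ ⊆ ℂⁿ`. -/
noncomputable def hyp (l : ι → MvPolynomial (Fin n) ℂ) (i : ι) : Submodule ℂ (Fin n → ℂ) :=
  LinearMap.ker (toLin (l i))

open Classical in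
/-- The intersection lattice `L(A)`: all intersections of nonempty subfamilies. -/
noncomputable def LA (l : ι → MvPolynomial (Fin n) ℂ) : Finset (Submodule ℂ (Fin n → ℂ)) :=
  (Finset.univ.powerset.filter Finset.Nonempty).image fun I : Finset ι => ⨅ i ∈ I, hyp l i

open Classical in
/-- `J(X) = {i : X ⊆ ker lᵢ}`. -/
noncomputable def JX (l : ι → MvPolynomial (Fin n) ℂ) (Y : Submodule ℂ (Fin n → ℂ)) :
    Finset ι :=
  Finset.univ.filter fun i => Y ≤ hyp l i

/-- `r(X) = n - dim X`, the codimension. -/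
noncomputable def rX (Y : Submodule ℂ (Fin n → ℂ)) : ℕ :=
  n - Module.finrank ℂ Y

/-- Irreducibility of the subarrangement with hyperplanes indexed by `J`. -/
def IrredOn (l : ι → MvPolynomial (Fin n) ℂ) (J : Finset ι) : Prop :=
  ¬ ∃ V₁ V₂ : Submodule ℂ (Fin n → ℂ), IsCompl V₁ V₂ ∧
      (∀ i ∈ J, V₁ ≤ hyp l i ∨ V₂ ≤ hyp l i) ∧
      (∃ i ∈ J, V₁ ≤ hyp l i) ∧ (∃ i ∈ J, V₂ ≤ hyp l i)

open Classical in
/-- `L'(A) = {X ∈ L(A) : A_X irreducible}`. -/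
noncomputable def Lprime (l : ι → MvPolynomial (Fin n) ℂ) :
    Finset (Submodule ℂ (Fin n → ℂ)) :=
  (LA l).filter fun Y => IrredOn l (JX l Y)

/-- The polynomial
`b_A = ∏_{X ∈ L'(A)} ∏_{j=0}^{2(card J(X) − r(X))} ((∑_{i ∈ J(X)} sᵢ) + r(X) + j)`. -/
noncomputable def bGen (l : ι → MvPolynomial (Fin n) ℂ) : MvPolynomial ι ℂ :=
  ∏ Y ∈ Lprime l, ∏ j ∈ Finset.range (2 * ((JX l Y).card - rX (n := n) Y) + 1),
    ((∑ i ∈ JX l Y, X i) + C ((rX (n := n) Y : ℂ) + (j : ℂ)))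

end Arrangement

open Arrangement in
set_option maxHeartbeats 1000000 in
/-- An operator `P = ∑ᵢ aᵢ Dᵢ + (c₀ + ∑ⱼ cⱼ sⱼ)` of ♯-order at most one
kills `f₁^{s₁}⋯f_p^{s_p}` (i.e. `P(1) = 0` in `M`) iff `c₀ = 0` and
`∑ᵢ aᵢ ∂fⱼ/∂xᵢ = −cⱼ fⱼ` for all `j`; i.e. exactly when `∑ᵢ aᵢ ∂/∂xᵢ` is a logarithmic
derivation for each `fⱼ` and `P` is the associated twisted operator. -/
theorem order_one_operator_annihilates_iff
    (n p : ℕ) (hp : 1 ≤ p) (f : Fin p → MvPolynomial (Fin n) ℂ)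
    (hf : ∀ j, f j ≠ 0)
    (D : Fin n → Module.End ℂ
      (Localization.Away (rename Sum.inl (∏ i, f i) : MvPolynomial (Fin n ⊕ Fin p) ℂ)))
    (hD : IsTwisted f D)
    (a : Fin n → MvPolynomial (Fin n) ℂ)
    (c0 : MvPolynomial (Fin n) ℂ) (c : Fin p → MvPolynomial (Fin n) ℂ) :
    ((∑ i, LinearMap.mulLeft ℂ
        (algebraMap (MvPolynomial (Fin n ⊕ Fin p) ℂ) _
          (rename Sum.inl (a i) : MvPolynomial (Fin n ⊕ Fin p) ℂ)) * D i)
      + LinearMap.mulLeft ℂ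
        (algebraMap (MvPolynomial (Fin n ⊕ Fin p) ℂ) _
          ((rename Sum.inl c0 : MvPolynomial (Fin n ⊕ Fin p) ℂ)
            + ∑ j, X (Sum.inr j) * rename Sum.inl (c j))))
      (1 : Localization.Away (rename Sum.inl (∏ i, f i) : MvPolynomial (Fin n ⊕ Fin p) ℂ))
      = 0
    ↔ (c0 = 0 ∧ ∀ j, ∑ i, a i * pderiv i (f j) = - c j * f j) := by
  classical
  obtain ⟨-, hD2⟩ := hD
  have hinst : (fun a b => Classical.propDecidable (a = b) : DecidableEq (Fin p))
      = instDecidableEqFin p := Subsingleton.elim _ _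
  simp only [hinst] at hD2
  have hFne : (∏ i, f i) ≠ 0 := Finset.prod_ne_zero_iff.mpr fun j _ => hf j
  have hFtne : (rename Sum.inl (∏ i, f i) : MvPolynomial (Fin n ⊕ Fin p) ℂ) ≠ 0 := fun h =>
    hFne ((map_eq_zero_iff _ (rename_injective Sum.inl Sum.inl_injective)).mp h)
  have hu : IsUnit (algebraMap (MvPolynomial (Fin n ⊕ Fin p) ℂ)
      (Localization.Away (rename Sum.inl (∏ i, f i) : MvPolynomial (Fin n ⊕ Fin p) ℂ))
      (rename Sum.inl (∏ i, f i))) :=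
    IsLocalization.Away.algebraMap_isUnit _
  have hinj : Function.Injective (algebraMap (MvPolynomial (Fin n ⊕ Fin p) ℂ)
      (Localization.Away (rename Sum.inl (∏ i, f i) : MvPolynomial (Fin n ⊕ Fin p) ℂ))) :=
    IsLocalization.injective _ (powers_le_nonZeroDivisors_of_noZeroDivisors hFtne)
  set G : MvPolynomial (Fin n ⊕ Fin p) ℂ :=
    rename Sum.inl (c0 * ∏ i, f i) + ∑ j, X (Sum.inr j) *
      rename Sum.inl ((∑ i, a i * pderiv i (f j) + c j * f j)
        * ∏ k ∈ Finset.univ.erase j, f k) with hG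
  -- per-j polynomial identity
  have hterm : ∀ j : Fin p,
      (∑ i, (rename Sum.inl (a i) : MvPolynomial (Fin n ⊕ Fin p) ℂ) *
          (X (Sum.inr j) * rename Sum.inl (pderiv i (f j) * ∏ k ∈ Finset.univ.erase j, f k)))
        + (rename Sum.inl (∏ i, f i) : MvPolynomial (Fin n ⊕ Fin p) ℂ) *
            (X (Sum.inr j) * rename Sum.inl (c j))
      = X (Sum.inr j) * rename Sum.inl ((∑ i, a i * pderiv i (f j) + c j * f j)
          * ∏ k ∈ Finset.univ.erase j, f k) := by
    intro j
    rw [show (∏ i, f i) = f j * ∏ k ∈ Finset.univ.erase j, f k from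
      (Finset.mul_prod_erase _ _ (Finset.mem_univ j)).symm]
    simp only [map_mul, map_add, map_sum, Finset.sum_mul, Finset.mul_sum, add_mul, mul_add]
    congr 1
    · exact Finset.sum_congr rfl fun i _ => by ring
    · ring
  -- the global polynomial identity
  have hpoly :
      (∑ i, (rename Sum.inl (a i) : MvPolynomial (Fin n ⊕ Fin p) ℂ) *
          ∑ j, X (Sum.inr j) * rename Sum.inl (pderiv i (f j) * ∏ k ∈ Finset.univ.erase j, f k))
        + (rename Sum.inl (∏ i, f i) : MvPolynomial (Fin n ⊕ Fin p) ℂ) *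
            ((rename Sum.inl c0 : MvPolynomial (Fin n ⊕ Fin p) ℂ)
              + ∑ j, X (Sum.inr j) * rename Sum.inl (c j)) = G := by
    rw [hG, show (rename Sum.inl (c0 * ∏ i, f i) : MvPolynomial (Fin n ⊕ Fin p) ℂ)
      = rename Sum.inl c0 * rename Sum.inl (∏ i, f i) from map_mul _ _ _,
      Finset.sum_congr rfl fun j _ => (hterm j).symm, Finset.sum_add_distrib]
    simp only [Finset.mul_sum, mul_add]
    rw [Finset.sum_comm]
    ring
  have key : algebraMap (MvPolynomial (Fin n ⊕ Fin p) ℂ)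
      (Localization.Away (rename Sum.inl (∏ i, f i) : MvPolynomial (Fin n ⊕ Fin p) ℂ))
      (rename Sum.inl (∏ i, f i)) *
      ((∑ i, algebraMap (MvPolynomial (Fin n ⊕ Fin p) ℂ) _
          (rename Sum.inl (a i) : MvPolynomial (Fin n ⊕ Fin p) ℂ) * D i 1)
        + algebraMap (MvPolynomial (Fin n ⊕ Fin p) ℂ) _
            ((rename Sum.inl c0 : MvPolynomial (Fin n ⊕ Fin p) ℂ)
              + ∑ j, X (Sum.inr j) * rename Sum.inl (c j)))
      = algebraMap (MvPolynomial (Fin n ⊕ Fin p) ℂ) _ G := by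
    rw [mul_add, Finset.mul_sum, ← map_mul,
      Finset.sum_congr rfl fun i _ => by
        rw [mul_left_comm, hD2 i, ← map_mul],
      ← map_sum, ← map_add]
    convert congrArg (algebraMap (MvPolynomial (Fin n ⊕ Fin p) ℂ) _) hpoly
  simp only [LinearMap.add_apply, LinearMap.sum_apply, Module.End.mul_apply,
    LinearMap.mulLeft_apply, mul_one]
  rw [← hu.mul_right_eq_zero, key, map_eq_zero_iff _ hinj]
  constructor
  · intro h
    have h0 : c0 * ∏ i, f i = 0 := by
      have := congrArg (aeval (Sum.elim X (fun _ => 0) :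
        Fin n ⊕ Fin p → MvPolynomial (Fin n) ℂ)) h
      have h' := this
      simp only [hG, map_add, map_sum, map_mul, aeval_rename, Function.comp_def,
        Sum.elim_inl, Sum.elim_inr, aeval_X, aeval_X_left_apply, map_zero,
        zero_mul, mul_zero, Finset.sum_const_zero, add_zero] at h'
      exact h'
    have hc0 : c0 = 0 := by
      rcases mul_eq_zero.mp h0 with h' | h'
      · exact h'
      · exact absurd h' hFne
    refine ⟨hc0, fun j => ?_⟩
    have hj := congrArg (aeval (Sum.elim X (fun k => if k = j then 1 else 0) :
      Fin n ⊕ Fin p → MvPolynomial (Fin n) ℂ)) h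
    simp only [hG, map_add, map_sum, map_mul, aeval_rename, Function.comp_def,
      Sum.elim_inl, Sum.elim_inr, aeval_X, aeval_X_left_apply, map_zero,
      ite_mul, one_mul, zero_mul, Finset.sum_ite_eq', Finset.mem_univ, if_true,
      h0, zero_add] at hj
    have hB : (∑ i, a i * pderiv i (f j) + c j * f j) = 0 := by
      rcases mul_eq_zero.mp hj with h' | h'
      · exact h'
      · exact absurd h' (Finset.prod_ne_zero_iff.mpr fun k _ => hf k)
    linear_combination hB
  · rintro ⟨rfl, h⟩
    have hz : ∀ j, (∑ i, a i * pderiv i (f j) + c j * f j) = 0 := fun j => by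
      rw [h j]; ring
    simp [hG, hz]
end
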